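/- Let R be a CI-ring with identity and A₁, …, Aₙ pairwise comaximal two-sided ideals. Then the canonical ring homomorphism R/(A₁A₂⋯Aₙ) → (R/A₁) × ⋯ × (R/Aₙ) is an isomorphism. -/

import Mathlib

open Pointwise

/-- The product of two two-sided ideals: the two-sided ideal generated by pointwise products. -/
def tmul {R : Type*} [Ring R] (A B : TwoSidedIdeal R) : TwoSidedIdeal R :=
  TwoSidedIdeal.span ((A : Set R) * (B : Set R))

/-- A CI-ring is a ring in which any two two-sided ideals commute. -/
def IsCIRing (R : Type*) [Ring R] : Prop :=
  ∀ A B : TwoSidedIdeal R, tmul A B = tmul B A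

/-- The ordered product of a list of two-sided ideals. -/
def tmulList {R : Type*} [Ring R] (l : List (TwoSidedIdeal R)) : TwoSidedIdeal R :=
  l.foldr tmul ⊤

section Aux

variable {R : Type*} [Ring R]

lemma tmem_top (x : R) : x ∈ (⊤ : TwoSidedIdeal R) := trivial

lemma tspan_le {s : Set R} {I : TwoSidedIdeal R} (h : s ⊆ I) : TwoSidedIdeal.span s ≤ I :=
  fun _ hx => TwoSidedIdeal.mem_span_iff.mp hx I h

lemma mul_mem_tmul {A B : TwoSidedIdeal R} {x y : R} (hx : x ∈ A) (hy : y ∈ B) :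
    x * y ∈ tmul A B :=
  TwoSidedIdeal.subset_span (Set.mul_mem_mul hx hy)

lemma tmul_le_left {A B : TwoSidedIdeal R} : tmul A B ≤ A := by
  apply tspan_le; rintro _ ⟨a, ha, b, hb, rfl⟩; exact A.mul_mem_right a b ha

lemma tmul_le_right {A B : TwoSidedIdeal R} : tmul A B ≤ B := by
  apply tspan_le; rintro _ ⟨a, ha, b, hb, rfl⟩; exact B.mul_mem_left a b hb

lemma eq_top_of_one_mem {I : TwoSidedIdeal R} (h : (1 : R) ∈ I) : I = ⊤ := by
  refine le_antisymm le_top fun x _ => ?_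
  simpa using I.mul_mem_left x 1 h

lemma inf_le_tmul (hR : IsCIRing R) {A B : TwoSidedIdeal R} (h : A ⊔ B = ⊤)
    {x : R} (hxA : x ∈ A) (hxB : x ∈ B) : x ∈ tmul A B := by
  obtain ⟨a, ha, b, hb, hab⟩ := TwoSidedIdeal.mem_sup.mp (h ▸ tmem_top (1 : R))
  have hx : x = x * a + x * b := by rw [← mul_add, hab, mul_one]
  rw [hx]
  refine (tmul A B).add_mem ?_ (mul_mem_tmul hxA hb)
  have : x * a ∈ tmul B A := mul_mem_tmul hxB ha
  rwa [hR B A] at this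

lemma tmulList_cons (I : TwoSidedIdeal R) (l : List (TwoSidedIdeal R)) :
    tmulList (I :: l) = tmul I (tmulList l) := rfl

lemma sup_tmulList_eq_top {J : TwoSidedIdeal R} {l : List (TwoSidedIdeal R)}
    (h : ∀ I ∈ l, J ⊔ I = ⊤) : J ⊔ tmulList l = ⊤ := by
  induction l with
  | nil =>
    have : tmulList ([] : List (TwoSidedIdeal R)) = ⊤ := rfl
    rw [this, sup_top_eq]
  | cons I l ih =>
    have h1 : J ⊔ I = ⊤ := h I List.mem_cons_self
    have h2 : J ⊔ tmulList l = ⊤ := ih fun I' hI' => h I' (List.mem_cons_of_mem _ hI')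
    obtain ⟨a1, ha1, b1, hb1, hab1⟩ := TwoSidedIdeal.mem_sup.mp (h1 ▸ tmem_top (1 : R))
    obtain ⟨a2, ha2, b2, hb2, hab2⟩ := TwoSidedIdeal.mem_sup.mp (h2 ▸ tmem_top (1 : R))
    apply eq_top_of_one_mem
    have hone : (1 : R) = a1 + b1 * a2 + b1 * b2 := by
      rw [add_assoc, ← mul_add, hab2, mul_one, hab1]
    rw [hone, tmulList_cons]
    exact (J ⊔ _).add_mem
      ((J ⊔ _).add_mem (TwoSidedIdeal.mem_sup_left ha1)
        (TwoSidedIdeal.mem_sup_left (J.mul_mem_left b1 a2 ha2)))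
      (TwoSidedIdeal.mem_sup_right (mul_mem_tmul hb1 hb2))

lemma mem_tmulList_iff (hR : IsCIRing R) {l : List (TwoSidedIdeal R)}
    (hl : l.Pairwise fun I J => I ⊔ J = ⊤) {x : R} :
    x ∈ tmulList l ↔ ∀ I ∈ l, x ∈ I := by
  induction l with
  | nil => exact ⟨fun _ I hI => absurd hI List.not_mem_nil, fun _ => trivial⟩
  | cons I l ih =>
    obtain ⟨hI, hl'⟩ := List.pairwise_cons.mp hl
    rw [tmulList_cons]
    constructor
    · intro hx J hJ
      rcases List.mem_cons.mp hJ with rfl | hJ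
      · exact tmul_le_left hx
      · exact (ih hl').mp (tmul_le_right hx) J hJ
    · intro hx
      have hxI : x ∈ I := hx I List.mem_cons_self
      have hxl : x ∈ tmulList l := (ih hl').mpr fun J hJ => hx J (List.mem_cons_of_mem _ hJ)
      exact inf_le_tmul hR (sup_tmulList_eq_top hI) hxI hxl

lemma exists_idem_fin {n : ℕ} (A : Fin n → TwoSidedIdeal R)
    (hco : ∀ i j, i ≠ j → A i ⊔ A j = ⊤) (i : Fin n) :
    ∃ e : R, e - 1 ∈ A i ∧ ∀ j, j ≠ i → e ∈ A j := by
  have key : ∀ s : Finset (Fin n), ∃ e : R, e - 1 ∈ A i ∧ ∀ j ∈ s, j ≠ i → e ∈ A j := by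
    intro s
    induction s using Finset.induction with
    | empty => exact ⟨1, by simp, by simp⟩
    | @insert k s hk ih =>
      obtain ⟨e', he'1, he'⟩ := ih
      by_cases hki : k = i
      · refine ⟨e', he'1, fun j hj hji => ?_⟩
        rcases Finset.mem_insert.mp hj with rfl | hj
        · exact absurd hki (by simpa using hji)
        · exact he' j hj hji
      · obtain ⟨a, ha, b, hb, hab⟩ :=
          TwoSidedIdeal.mem_sup.mp ((hco i k fun h => hki h.symm) ▸ tmem_top (1 : R))
        refine ⟨b * e', ?_, ?_⟩
        · have h1 : b * e' - 1 = b * (e' - 1) + (b - 1) := by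
            rw [mul_sub, mul_one]; abel
          have h2 : b - 1 = -a := by rw [← hab]; abel
          rw [h1, h2]
          exact (A i).add_mem ((A i).mul_mem_left _ _ he'1) (neg_mem ha)
        · intro j hj hji
          rcases Finset.mem_insert.mp hj with rfl | hj
          · exact (A j).mul_mem_right _ _ hb
          · exact (A j).mul_mem_left _ _ (he' j hj hji)
  obtain ⟨e, h1, h2⟩ := key Finset.univ
  exact ⟨e, h1, fun j hj => h2 j (Finset.mem_univ j) hj⟩

/-- Lift of a ring hom along a ring congruence. -/
def liftHom {S : Type*} [Ring S] (c : RingCon R) (f : R →+* S)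
    (h : ∀ a b, c a b → f a = f b) : c.Quotient →+* S where
  toFun := Quotient.lift f fun a b hab => h a b hab
  map_one' := by exact f.map_one
  map_mul' x y := Quotient.inductionOn₂ x y fun a b => by exact f.map_mul a b
  map_zero' := by exact f.map_zero
  map_add' x y := Quotient.inductionOn₂ x y fun a b => by exact f.map_add a b

end Aux

/-- For pairwise comaximal ideals of a CI-ring, the canonical map
R/(A₁⋯Aₙ) → (R/A₁) × ⋯ × (R/Aₙ) is a ring isomorphism. -/
theorem quotient_prod_equiv_pi {R : Type*} [Ring R] (hR : IsCIRing R)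
    {n : ℕ} (A : Fin n → TwoSidedIdeal R) (hco : ∀ i j, i ≠ j → A i ⊔ A j = ⊤) :
    ∃ e : (tmulList (List.ofFn A)).ringCon.Quotient ≃+* (∀ i, (A i).ringCon.Quotient),
      ∀ r : R, e ((tmulList (List.ofFn A)).ringCon.mk' r) = fun i => (A i).ringCon.mk' r := by
  set T := tmulList (List.ofFn A) with hT
  have hpair : (List.ofFn A).Pairwise fun I J => I ⊔ J = ⊤ :=
    List.pairwise_ofFn.mpr fun i j hij => hco i j (Fin.ne_of_lt hij)
  have hmemT : ∀ x : R, x ∈ T ↔ ∀ i, x ∈ A i := by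
    intro x
    rw [hT, mem_tmulList_iff hR hpair]
    constructor
    · intro h i; exact h (A i) (List.mem_ofFn.mpr ⟨i, rfl⟩)
    · intro h J hJ
      obtain ⟨i, rfl⟩ := List.mem_ofFn.mp hJ
      exact h i
  let f : R →+* ∀ i, (A i).ringCon.Quotient := Pi.ringHom fun i => (A i).ringCon.mk'
  have hker : ∀ a b, T.ringCon a b → f a = f b := by
    intro a b hab
    rw [TwoSidedIdeal.rel_iff] at hab
    funext i
    exact (RingCon.eq _).mpr ((TwoSidedIdeal.rel_iff _ _ _).mpr ((hmemT _).mp hab i))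
  let g := liftHom T.ringCon f hker
  have hinj : Function.Injective g := by
    intro x y
    refine Quotient.inductionOn₂ x y fun a b h => ?_
    have hab : ∀ i, (A i).ringCon a b := fun i => (RingCon.eq _).mp (congrFun h i)
    exact Quotient.sound ((TwoSidedIdeal.rel_iff _ _ _).mpr
      ((hmemT _).mpr fun i => (TwoSidedIdeal.rel_iff _ _ _).mp (hab i)))
  have hsurj : Function.Surjective g := by
    intro t
    choose e he1 he2 using exists_idem_fin A hco
    set x := ∑ i, (t i).out * e i with hx
    refine ⟨T.ringCon.mk' x, ?_⟩
    funext i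
    show (A i).ringCon.mk' x = t i
    conv_rhs => rw [← Quotient.out_eq (t i)]
    refine (RingCon.eq _).mpr ((TwoSidedIdeal.rel_iff _ _ _).mpr ?_)
    have hsum : x - (t i).out =
        ∑ j, ((t j).out * e j - if j = i then (t i).out else 0) := by
      rw [Finset.sum_sub_distrib, ← hx, Finset.sum_ite_eq' Finset.univ i fun _ => (t i).out,
        if_pos (Finset.mem_univ i)]
    rw [hsum]
    refine sum_mem fun j _ => ?_
    by_cases hji : j = i
    · subst hji
      rw [if_pos rfl]
      have : (t j).out * e j - (t j).out = (t j).out * (e j - 1) := by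
        rw [mul_sub, mul_one]
      rw [this]
      exact (A j).mul_mem_left _ _ (he1 j)
    · rw [if_neg hji, sub_zero]
      exact (A i).mul_mem_left _ _ (he2 j i fun h => hji h.symm)
  exact ⟨RingEquiv.ofBijective g ⟨hinj, hsurj⟩, fun r => rfl⟩
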